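/- Let X be a Polish space and G a Polish group acting continuously on X. Suppose x ∈ X is such that for every open neighborhood V of the identity in G, the set V.x = {g.x : g ∈ V} is somewhere dense in the closure of the orbit G.x. Then the orbit G.x is comeager in the closure of G.x. -/

import Mathlib

open Filter Topology Set MulAction

open TopologicalSpace

section AuxMeagre

variable {T : Type*} [TopologicalSpace T]

private lemma isMeagre_union' {s t : Set T} (hs : IsMeagre s) (ht : IsMeagre t) :
    IsMeagre (s ∪ t) := by
  rw [IsMeagre, compl_union]
  exact inter_mem hs ht

private lemma nonempty_of_not_isMeagre' {s : Set T} (hs : ¬ IsMeagre s) : s.Nonempty := by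
  rcases s.eq_empty_or_nonempty with h | h
  · exact absurd (h ▸ IsMeagre.empty) hs
  · exact h

private lemma not_isMeagre_of_isOpen' [BaireSpace T] {s : Set T} (ho : IsOpen s)
    (hne : s.Nonempty) : ¬ IsMeagre s := by
  intro hm
  have hd : Dense sᶜ := dense_of_mem_residual hm
  rcases hne with ⟨a, ha⟩
  rcases mem_closure_iff.mp (hd a) s ho ha with ⟨b, hb1, hb2⟩
  exact hb2 hb1

private lemma isMeagre_of_closed_empty_interior' {s : Set T} (hc : IsClosed s)
    (hi : interior s = ∅) : IsMeagre s := by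
  rw [IsMeagre]
  exact residual_of_dense_open hc.isOpen_compl (interior_eq_empty_iff_dense_compl.mp hi)

private lemma isMeagre_diff_of_eventuallyEq' {P Q : Set T} (h : P =ᶠ[residual T] Q) :
    IsMeagre (P \ Q) := by
  rw [IsMeagre]
  refine mem_of_superset h ?_
  intro z hz
  simp only [mem_compl_iff, mem_diff, not_and, not_not]
  intro hzP
  have hz' : (z ∈ P) = (z ∈ Q) := hz
  exact hz' ▸ hzP

end AuxMeagre

section Hull

variable {T : Type*} [TopologicalSpace T] [SecondCountableTopology T]

/-- The "Baire hull" of a set: points all of whose basic neighborhoods meet `S`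
in a nonmeager set. -/
private def bHull (S : Set T) : Set T :=
  {z | ∀ N ∈ countableBasis T, z ∈ N → ¬ IsMeagre (N ∩ S)}

private lemma isClosed_bHull (S : Set T) : IsClosed (bHull S) := by
  have h : bHull S = ⋂ N ∈ {N | N ∈ countableBasis T ∧ IsMeagre (N ∩ S)}, (Nᶜ : Set T) := by
    ext z
    simp only [bHull, mem_setOf_eq, mem_iInter, mem_compl_iff]
    constructor
    · rintro hz N ⟨hNc, hNm⟩ hzN
      exact hz N hNc hzN hNm
    · intro hz N hNc hzN hNm
      exact hz N ⟨hNc, hNm⟩ hzN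
  rw [h]
  exact isClosed_biInter fun N hN => (isOpen_of_mem_countableBasis hN.1).isClosed_compl

private lemma bHull_subset_closure (S : Set T) : bHull S ⊆ closure S := by
  intro z hz
  rw [mem_closure_iff]
  intro o ho hzo
  obtain ⟨N, hNc, hzN, hNo⟩ := (isBasis_countableBasis T).exists_subset_of_mem_open hzo ho
  obtain ⟨w, hw⟩ := nonempty_of_not_isMeagre' (hz N hNc hzN)
  exact ⟨w, hNo hw.1, hw.2⟩

private lemma isMeagre_diff_bHull (S : Set T) : IsMeagre (S \ bHull S) := by
  have hm : IsMeagre (⋃ N ∈ {N | N ∈ countableBasis T ∧ IsMeagre (N ∩ S)}, N ∩ S) := by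
    rw [IsMeagre, compl_iUnion₂]
    refine (countable_bInter_mem
      (((countable_countableBasis T).mono (fun N hN => hN.1)))).mpr fun N hN => hN.2
  refine hm.mono ?_
  rintro z ⟨hzS, hz⟩
  simp only [bHull, mem_setOf_eq, not_forall] at hz
  obtain ⟨N, hNc, hzN, hNm⟩ := hz
  exact mem_biUnion ⟨hNc, not_not.mp hNm⟩ ⟨hzN, hzS⟩

end Hull

section Scheme

variable (G : Type*) [MetricSpace G] [SecondCountableTopology G] [Nonempty G]

private def schemeSet : List ℕ → Set G
  | [] => univ
  | i :: s => schemeSet s ∩ Metric.closedBall (denseSeq G i) ((1 / 2 : ℝ) ^ (s.length + 1))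

variable {G}

private lemma isClosed_schemeSet : ∀ s : List ℕ, IsClosed (schemeSet G s) := by
  intro s
  induction s with
  | nil => exact isClosed_univ
  | cons i s ih => exact ih.inter Metric.isClosed_closedBall

private lemma schemeSet_cons_subset (i : ℕ) (s : List ℕ) :
    schemeSet G (i :: s) ⊆ schemeSet G s :=
  inter_subset_left

private lemma schemeSet_anti : ∀ {s t : List ℕ}, t <:+ s → schemeSet G s ⊆ schemeSet G t := by
  intro s
  induction s with
  | nil =>
    intro t ht
    rw [List.suffix_nil] at ht
    subst ht
    exact subset_rfl
  | cons i s ih =>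
    intro t ht
    rcases List.suffix_cons_iff.mp ht with h | h
    · subst h; exact subset_rfl
    · exact (schemeSet_cons_subset i s).trans (ih h)

private lemma schemeSet_cover (s : List ℕ) :
    schemeSet G s ⊆ ⋃ i : ℕ, schemeSet G (i :: s) := by
  intro g hg
  obtain ⟨i, hi⟩ := (denseRange_denseSeq G).exists_dist_lt g
    (by positivity : (0 : ℝ) < (1 / 2 : ℝ) ^ (s.length + 1))
  exact mem_iUnion.mpr ⟨i, hg, Metric.mem_closedBall.mpr hi.le⟩

private lemma schemeSet_dist {i : ℕ} {s : List ℕ} {a b : G}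
    (ha : a ∈ schemeSet G (i :: s)) (hb : b ∈ schemeSet G (i :: s)) :
    dist a b ≤ 2 * (1 / 2 : ℝ) ^ (s.length + 1) := by
  have h1 : dist a (denseSeq G i) ≤ (1 / 2 : ℝ) ^ (s.length + 1) :=
    Metric.mem_closedBall.mp ha.2
  have h2 : dist b (denseSeq G i) ≤ (1 / 2 : ℝ) ^ (s.length + 1) :=
    Metric.mem_closedBall.mp hb.2
  have := dist_triangle_right a b (denseSeq G i)
  linarith

end Scheme

/-- The range of a continuous map from a Polish-type space into a second countable
Baire metric space has the property of Baire: it differs from an open set by meager sets. -/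
private lemma bp_range {G T : Type*} [MetricSpace G] [CompleteSpace G]
    [SecondCountableTopology G] [Nonempty G] [MetricSpace T]
    [SecondCountableTopology T] [BaireSpace T]
    (φ : G → T) (hφ : Continuous φ) :
    ∃ U : Set T, IsOpen U ∧ IsMeagre (range φ \ U) ∧ IsMeagre (U \ range φ) := by
  classical
  set A : List ℕ → Set T := fun s => φ '' schemeSet G s with hA
  set C : List ℕ → Set T := fun s => ⋂ t ∈ {t | t <:+ s}, bHull (A t) with hC
  have hCmem : ∀ {z : T} {s : List ℕ}, z ∈ C s ↔ ∀ t, t <:+ s → z ∈ bHull (A t) := by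
    intro z s
    simp only [hC, mem_iInter, mem_setOf_eq]
  have hAanti : ∀ {t s : List ℕ}, t <:+ s → A s ⊆ A t :=
    fun h => image_mono (schemeSet_anti h)
  have hCclosed : ∀ s, IsClosed (C s) :=
    fun s => isClosed_biInter fun t _ => isClosed_bHull _
  -- exceptional meager set
  set EXC : Set T := ⋃ t : List ℕ, (A t \ bHull (A t)) with hEXC
  have hEXCm : IsMeagre EXC := by
    rw [IsMeagre, hEXC, compl_iUnion]
    exact (countable_iInter_mem.mpr fun t => isMeagre_diff_bHull (A t))
  set Ps : List ℕ → Set T := fun s => C s \ ⋃ i : ℕ, C (i :: s) with hPs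
  -- Each Ps s is meager
  have hPsm : ∀ s, IsMeagre (Ps s) := by
    intro s
    by_contra hnm
    borelize T
    have hmeas : MeasurableSet (Ps s) :=
      ((hCclosed s).measurableSet).diff (MeasurableSet.iUnion fun i => (hCclosed _).measurableSet)
    obtain ⟨U, hUo, hPU⟩ := hmeas.residualEq_isOpen
    have hPsU : IsMeagre (Ps s \ U) := isMeagre_diff_of_eventuallyEq' hPU
    have hUPs : IsMeagre (U \ Ps s) := isMeagre_diff_of_eventuallyEq' hPU.symm
    have hUne : U.Nonempty := by
      rcases U.eq_empty_or_nonempty with h0 | h0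
      · exfalso
        apply hnm
        have : Ps s \ U = Ps s := by rw [h0, diff_empty]
        rwa [this] at hPsU
      · exact h0
    obtain ⟨z₁, hz₁⟩ := hUne
    obtain ⟨N, hNcB, hz₁N, hNU⟩ := (isBasis_countableBasis T).exists_subset_of_mem_open hz₁ hUo
    have hNopen := isOpen_of_mem_countableBasis hNcB
    have hNne : N.Nonempty := ⟨z₁, hz₁N⟩
    have hNPsm : IsMeagre (N \ Ps s) := hUPs.mono (diff_subset_diff_left hNU)
    have hNPs : (N ∩ Ps s).Nonempty := by
      by_contra hcon
      refine not_isMeagre_of_isOpen' hNopen hNne (hNPsm.mono ?_)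
      intro z hz
      exact ⟨hz, fun hzP => hcon ⟨z, hz, hzP⟩⟩
    obtain ⟨z₀, hz₀N, hz₀P⟩ := hNPs
    have hz₀C : z₀ ∈ C s := hz₀P.1
    have hANm : ¬ IsMeagre (N ∩ A s) :=
      (hCmem.mp hz₀C s (List.suffix_refl s)) N hNcB hz₀N
    apply hANm
    have hsub : N ∩ A s ⊆ (N \ Ps s) ∪ EXC := by
      rintro z ⟨hzN, hzA⟩
      obtain ⟨g, hg, rfl⟩ := hzA
      obtain ⟨i, hgi⟩ := mem_iUnion.mp (schemeSet_cover s hg)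
      by_cases hzC : φ g ∈ C (i :: s)
      · left
        exact ⟨hzN, fun hP => hP.2 (mem_iUnion.mpr ⟨i, hzC⟩)⟩
      · right
        rw [hCmem] at hzC
        push_neg at hzC
        obtain ⟨t, htsuf, htn⟩ := hzC
        exact mem_iUnion.mpr ⟨t, hAanti htsuf ⟨g, hgi, rfl⟩, htn⟩
    exact (isMeagre_union' hNPsm hEXCm).mono hsub
  set PSU : Set T := ⋃ s : List ℕ, Ps s with hPSU
  have hPSUm : IsMeagre PSU := by
    rw [IsMeagre, hPSU, compl_iUnion]
    exact (countable_iInter_mem.mpr fun s => hPsm s)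
  set D : Set T := C [] with hD
  -- range φ \ D is meager (it lies in EXC)
  have h1 : range φ \ D ⊆ EXC := by
    rintro z ⟨⟨g, rfl⟩, hzD⟩
    have hz : φ g ∈ A [] := ⟨g, trivial, rfl⟩
    have : φ g ∉ bHull (A []) := by
      intro hcon
      apply hzD
      rw [hD, hCmem]
      intro t ht
      rw [List.suffix_nil] at ht
      subst ht
      exact hcon
    exact mem_iUnion.mpr ⟨[], hz, this⟩
  -- D \ PSU ⊆ range φ
  have h2 : D \ PSU ⊆ range φ := by
    rintro z ⟨hzD, hzP⟩
    have hzP' : ∀ s, z ∉ Ps s := fun s hs => hzP (mem_iUnion.mpr ⟨s, hs⟩)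
    have step : ∀ s, z ∈ C s → ∃ i, z ∈ C (i :: s) := by
      intro s hs
      by_contra hcon
      push_neg at hcon
      exact hzP' s ⟨hs, fun hi => by
        obtain ⟨i, hi'⟩ := mem_iUnion.mp hi
        exact hcon i hi'⟩
    have hzD' : z ∈ C [] := hzD
    let F : ℕ → {s : List ℕ // z ∈ C s} := fun n =>
      Nat.rec ⟨[], hzD'⟩
        (fun _ p => ⟨Classical.choose (step p.1 p.2) :: p.1,
          Classical.choose_spec (step p.1 p.2)⟩) n
    have hFsucc : ∀ n, ∃ i, (F (n + 1)).1 = i :: (F n).1 := fun n => ⟨_, rfl⟩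
    have hFlen : ∀ n, (F n).1.length = n := by
      intro n
      induction n with
      | zero => rfl
      | succ n ih =>
        obtain ⟨i, hi⟩ := hFsucc n
        rw [hi, List.length_cons, ih]
    have hFsuf : ∀ n m, n ≤ m → (F n).1 <:+ (F m).1 := by
      intro n m h
      induction m, h using Nat.le_induction with
      | base => exact List.suffix_refl _
      | succ m _ ih =>
        obtain ⟨i, hi⟩ := hFsucc m
        rw [hi]
        exact ih.trans (List.suffix_cons i _)
    have pick : ∀ n : ℕ, ∃ g : G,
        g ∈ schemeSet G (F (n + 1)).1 ∧ dist z (φ g) < (1 / 2 : ℝ) ^ n := by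
      intro n
      have hzB : z ∈ bHull (A (F (n + 1)).1) :=
        hCmem.mp (F (n + 1)).2 _ (List.suffix_refl _)
      have hzcl : z ∈ closure (A (F (n + 1)).1) := bHull_subset_closure _ hzB
      obtain ⟨a, haA, had⟩ := Metric.mem_closure_iff.mp hzcl ((1 / 2 : ℝ) ^ n) (by positivity)
      obtain ⟨g, hg, rfl⟩ := haA
      exact ⟨g, hg, had⟩
    choose u hu₁ hu₂ using pick
    have hubnd : ∀ N n, N ≤ n → dist (u n) (u N) ≤ (1 / 2 : ℝ) ^ N := by
      intro N n hNn
      have h1' : u n ∈ schemeSet G (F (N + 1)).1 :=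
        schemeSet_anti (hFsuf (N + 1) (n + 1) (by omega)) (hu₁ n)
      have h2' : u N ∈ schemeSet G (F (N + 1)).1 := hu₁ N
      obtain ⟨i, hi⟩ := hFsucc N
      rw [hi] at h1' h2'
      have hd := schemeSet_dist h1' h2'
      rw [hFlen] at hd
      calc dist (u n) (u N) ≤ 2 * (1 / 2 : ℝ) ^ (N + 1) := hd
        _ = (1 / 2 : ℝ) ^ N := by ring
    have hcauchy : CauchySeq u := by
      rw [Metric.cauchySeq_iff']
      intro ε hε
      obtain ⟨N, hN⟩ := exists_pow_lt_of_lt_one hε (by norm_num : (1 / 2 : ℝ) < 1)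
      exact ⟨N, fun n hn => lt_of_le_of_lt (hubnd N n hn) hN⟩
    obtain ⟨g₀, hg₀⟩ := cauchySeq_tendsto_of_complete hcauchy
    refine ⟨g₀, ?_⟩
    have ht1 : Tendsto (fun n => φ (u n)) atTop (𝓝 (φ g₀)) :=
      ((hφ.tendsto g₀).comp hg₀)
    have ht2 : Tendsto (fun n => φ (u n)) atTop (𝓝 z) := by
      rw [tendsto_iff_dist_tendsto_zero]
      refine squeeze_zero (g := fun n => (1 / 2 : ℝ) ^ n) (fun n => dist_nonneg)
        (fun n => ?_) ?_
      · rw [dist_comm]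
        exact (hu₂ n).le
      · exact tendsto_pow_atTop_nhds_zero_of_lt_one (by norm_num) (by norm_num)
    exact tendsto_nhds_unique ht1 ht2
  refine ⟨interior D, isOpen_interior, ?_, ?_⟩
  · -- range φ \ interior D ⊆ (range φ \ D) ∪ (D \ interior D)
    have hbd : IsMeagre (D \ interior D) := by
      refine isMeagre_of_closed_empty_interior'
        ((hCclosed []).inter isOpen_interior.isClosed_compl) ?_
      rw [eq_empty_iff_forall_notMem]
      intro z hz
      have h1' : z ∈ interior D := interior_mono inter_subset_left hz
      have h2' : z ∈ (interior D)ᶜ := interior_subset hz |>.2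
      exact h2' h1'
    refine (isMeagre_union' (hEXCm.mono h1) hbd).mono ?_
    rintro z ⟨hzr, hzi⟩
    by_cases hzD : z ∈ D
    · exact Or.inr ⟨hzD, hzi⟩
    · exact Or.inl ⟨hzr, hzD⟩
  · -- interior D \ range φ ⊆ PSU
    refine hPSUm.mono ?_
    rintro z ⟨hzi, hzr⟩
    by_contra hzP
    exact hzr (h2 ⟨interior_subset hzi, hzP⟩)

theorem stmt0 {X G : Type*} [TopologicalSpace X] [PolishSpace X]
    [Group G] [TopologicalSpace G] [PolishSpace G] [IsTopologicalGroup G]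
    [MulAction G X] [ContinuousSMul G X] (x : X)
    (h : ∀ V : Set G, IsOpen V → (1 : G) ∈ V →
      ¬ IsNowhereDense ((Subtype.val ⁻¹' ((· • x) '' V)) :
        Set ↥(closure (MulAction.orbit G x)))) :
    (Subtype.val ⁻¹' (MulAction.orbit G x) :
      Set ↥(closure (MulAction.orbit G x))) ∈
        residual ↥(closure (MulAction.orbit G x)) := by
  classical
  haveI : Nonempty G := ⟨1⟩
  -- T is the closure of the orbit, as a subtype
  set Y : Set X := closure (MulAction.orbit G x) with hY
  haveI hPolT : PolishSpace Y := IsClosed.polishSpace isClosed_closure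
  -- the orbit map into Y
  have hmaps : ∀ (g : G), ∀ y ∈ Y, g • y ∈ Y := by
    intro g y hy
    have h1 : (g • ·) '' closure (MulAction.orbit G x) ⊆
        closure ((g • ·) '' MulAction.orbit G x) :=
      image_closure_subset_closure_image (continuous_const_smul g)
    have h2 : (g • ·) '' MulAction.orbit G x ⊆ MulAction.orbit G x := by
      rintro _ ⟨_, ⟨k, rfl⟩, rfl⟩
      exact ⟨g * k, by simp [mul_smul]⟩
    exact closure_mono h2 (h1 ⟨y, hy, rfl⟩)
  set φ : G → Y := fun g => ⟨g • x, subset_closure ⟨g, rfl⟩⟩ with hφdef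
  have hφ : Continuous φ :=
    Continuous.subtype_mk (continuous_id.smul continuous_const) _
  -- the homeomorphisms of Y induced by the action
  have ekey : ∀ g : G, ∃ eg : Y ≃ₜ Y, ∀ z : Y, (eg z : X) = g • (z : X) := by
    intro g
    refine ⟨⟨⟨fun z => ⟨g • (z : X), hmaps g z z.2⟩,
      fun z => ⟨g⁻¹ • (z : X), hmaps g⁻¹ z z.2⟩, ?_, ?_⟩, ?_, ?_⟩, fun z => rfl⟩
    · intro z; exact Subtype.ext (inv_smul_smul g (z : X))
    · intro z; exact Subtype.ext (smul_inv_smul g (z : X))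
    · exact Continuous.subtype_mk ((continuous_const_smul g).comp continuous_subtype_val) _
    · exact Continuous.subtype_mk ((continuous_const_smul g⁻¹).comp continuous_subtype_val) _
  choose e he using ekey
  have heφ : ∀ (g k : G), e g (φ k) = φ (g * k) := by
    intro g k
    apply Subtype.ext
    rw [he g (φ k)]
    show g • (k • x) = (g * k) • x
    rw [mul_smul]
  -- identify the goal set with range φ
  have hrange : (Subtype.val ⁻¹' (MulAction.orbit G x) : Set Y) = range φ := by
    ext z
    constructor
    · rintro ⟨g, hg⟩
      exact ⟨g, Subtype.ext hg⟩
    · rintro ⟨g, rfl⟩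
      exact ⟨g, rfl⟩
  -- density of the orbit in Y
  have hdense : Dense (range φ) := by
    intro z
    rw [closure_subtype]
    have himg : Subtype.val '' (range φ) = MulAction.orbit G x := by
      ext y
      constructor
      · rintro ⟨w, ⟨g, rfl⟩, rfl⟩
        exact ⟨g, rfl⟩
      · rintro ⟨g, rfl⟩
        exact ⟨φ g, ⟨g, rfl⟩, rfl⟩
    rw [himg]
    exact z.2
  -- upgrade to metric structures
  letI := upgradeIsCompletelyMetrizable G
  letI := upgradeIsCompletelyMetrizable Y
  haveI : BaireSpace Y := inferInstance
  -- the orbit is nonmeager in Y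
  have hONM : ¬ IsMeagre (range φ) := by
    intro hM
    rw [IsMeagre] at hM
    obtain ⟨S, hSo, hSd, hSc, hSsub⟩ := mem_residual_iff.mp hM
    haveI := hSc.to_subtype
    have cover : ⋃ t : S, φ ⁻¹' ((t : Set Y)ᶜ) = univ := by
      rw [eq_univ_iff_forall]
      intro g
      by_contra hcon
      simp only [mem_iUnion, mem_preimage, mem_compl_iff, not_exists, not_not] at hcon
      have : φ g ∈ ⋂₀ S := fun t ht => hcon ⟨t, ht⟩
      exact (hSsub this) ⟨g, rfl⟩
    obtain ⟨t, ht⟩ := nonempty_interior_of_iUnion_of_closed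
      (fun t : S => ((hSo t t.2).isClosed_compl).preimage hφ) cover
    obtain ⟨g₀, hg₀⟩ := ht
    set V : Set G := (fun v => g₀ * v) ⁻¹' (interior (φ ⁻¹' ((t : Set Y)ᶜ))) with hV
    have hVopen : IsOpen V := isOpen_interior.preimage (continuous_mul_left g₀)
    have hV1 : (1 : G) ∈ V := by
      show g₀ * 1 ∈ interior (φ ⁻¹' ((t : Set Y)ᶜ))
      rwa [mul_one]
    refine h V hVopen hV1 ?_
    -- the set in question is φ '' V
    have hSV : (Subtype.val ⁻¹' ((· • x) '' V) : Set Y) = φ '' V := by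
      ext z
      constructor
      · rintro ⟨v, hv, hvx⟩
        exact ⟨v, hv, Subtype.ext hvx⟩
      · rintro ⟨v, hv, rfl⟩
        exact ⟨v, hv, rfl⟩
    rw [IsNowhereDense, hSV]
    have hsub : φ '' V ⊆ (e g₀⁻¹) '' ((t : Set Y)ᶜ) := by
      rintro _ ⟨v, hv, rfl⟩
      refine ⟨φ (g₀ * v), ?_, ?_⟩
      · have hv' : g₀ * v ∈ interior (φ ⁻¹' ((t : Set Y)ᶜ)) := hv
        have hv'' : g₀ * v ∈ φ ⁻¹' ((t : Set Y)ᶜ) := interior_subset hv'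
        exact hv''
      · rw [heφ]
        congr 1
        rw [inv_mul_cancel_left]
    have hcl : IsClosed ((e g₀⁻¹) '' ((t : Set Y)ᶜ)) :=
      (Homeomorph.isClosed_image _).mpr (hSo t t.2).isClosed_compl
    have hint : interior ((e g₀⁻¹) '' ((t : Set Y)ᶜ)) = ∅ := by
      rw [← Homeomorph.image_interior]
      rw [interior_compl, (hSd t t.2).closure_eq, compl_univ, image_empty]
    rw [eq_empty_iff_forall_notMem]
    intro z hz
    have : z ∈ interior ((e g₀⁻¹) '' ((t : Set Y)ᶜ)) :=
      interior_mono ((closure_minimal hsub hcl)) hz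
    rw [hint] at this
    exact this
  -- the Baire property of the orbit
  obtain ⟨U, hUopen, hRU, hUR⟩ := bp_range φ hφ
  -- U is nonempty
  have hUne : U.Nonempty := by
    rcases U.eq_empty_or_nonempty with h0 | h0
    · exfalso
      apply hONM
      have : range φ \ U = range φ := by rw [h0, diff_empty]
      rwa [this] at hRU
    · exact h0
  -- U meets the orbit
  have hUO : ∃ g₀ : G, φ g₀ ∈ U := by
    by_contra hcon
    push_neg at hcon
    refine not_isMeagre_of_isOpen' hUopen hUne (hUR.mono ?_)
    intro z hz
    refine ⟨hz, ?_⟩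
    rintro ⟨g, rfl⟩
    exact hcon g hz
  obtain ⟨g₀, hg₀U⟩ := hUO
  -- saturate U
  set GN : Set Y := ⋃ g : G, (e g) '' U with hGN
  have hGNopen : IsOpen GN :=
    isOpen_iUnion fun g => (Homeomorph.isOpen_image (e g)).mpr hUopen
  have hGNsup : range φ ⊆ GN := by
    rintro _ ⟨g, rfl⟩
    refine mem_iUnion.mpr ⟨g * g₀⁻¹, φ g₀, hg₀U, ?_⟩
    rw [heφ]
    congr 1
    rw [inv_mul_cancel_right]
  have hGNdense : Dense GN := hdense.mono hGNsup
  -- countable subcover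
  obtain ⟨Tc, hTcc, hTceq⟩ := TopologicalSpace.isOpen_iUnion_countable
    (fun g : G => (e g) '' U) (fun g => (Homeomorph.isOpen_image (e g)).mpr hUopen)
  have hGNdiff : GN \ range φ ⊆ ⋃ g ∈ Tc, (e g) '' (U \ range φ) := by
    rintro z ⟨hzGN, hzr⟩
    rw [hGN, ← hTceq] at hzGN
    obtain ⟨g, hgT, w, hwU, rfl⟩ := by
      simpa only [mem_iUnion] using hzGN
    refine mem_biUnion hgT ⟨w, ⟨hwU, ?_⟩, rfl⟩
    rintro ⟨k, rfl⟩
    exact hzr ⟨g * k, (heφ g k).symm⟩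
  have hGNdiffm : IsMeagre (GN \ range φ) := by
    refine IsMeagre.mono hGNdiff ?_
    rw [IsMeagre, compl_iUnion₂]
    refine (countable_bInter_mem hTcc).mpr fun g hg => ?_
    have himg : (e g) '' (U \ range φ) = (e g).symm ⁻¹' (U \ range φ) := by
      ext z
      constructor
      · rintro ⟨w, hw, rfl⟩
        simpa using hw
      · intro hz
        exact ⟨(e g).symm z, hz, by simp⟩
    rw [himg]
    exact IsMeagre.preimage_of_isOpenMap (e g).symm.continuous (e g).symm.isOpenMap hUR
  have hGNcm : IsMeagre GNᶜ := by
    rw [IsMeagre, compl_compl]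
    exact residual_of_dense_open hGNopen hGNdense
  -- conclude
  rw [hrange]
  have hfinal : IsMeagre (range φ)ᶜ := by
    refine (isMeagre_union' hGNcm hGNdiffm).mono ?_
    intro z hz
    by_cases hzGN : z ∈ GN
    · exact Or.inr ⟨hzGN, hz⟩
    · exact Or.inl hzGN
  rw [IsMeagre, compl_compl] at hfinal
  exact hfinal
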